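/- arXiv:1507.05643 — 2 statements merged into one kernel-verified Lean document; each statement's English description precedes it below -/
import Mathlib

section
/- Let E_1, ..., E_n be pairwise distinct real numbers such that the nonzero gaps are non-degenerate, i.e., whenever E_β − E_α = E_γ − E_σ with α ≠ β and σ ≠ γ, one has (α,β) = (σ,γ). Then for all indices α, β, γ, σ, the long-time average of exp(−iτ(E_β − E_α + E_γ − E_σ)) equals δ_{αβ}δ_{σγ} + δ_{σβ}δ_{γα} − δ_{αβ}δ_{βγ}δ_{γσ} (where δ is the Kronecker delta on indices). -/
open MeasureTheory Filter

lemma avg_exp_key (θ : ℝ) :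
    Tendsto (fun T : ℝ => ((1 / T : ℝ) : ℂ) * ∫ τ in (0:ℝ)..T,
        Complex.exp (-(Complex.I * (τ * θ)))) atTop
      (nhds (if θ = 0 then 1 else 0)) := by
  by_cases hθ : θ = 0
  · subst hθ
    simp only [if_pos rfl]
    refine Tendsto.congr' ?_ tendsto_const_nhds
    filter_upwards [eventually_gt_atTop (0:ℝ)] with T hT
    simp only [Complex.ofReal_zero, mul_zero, neg_zero, Complex.exp_zero]
    rw [intervalIntegral.integral_const, sub_zero, Complex.real_smul, mul_one, one_div]
    rw [Complex.ofReal_inv, inv_mul_cancel₀ (by exact_mod_cast hT.ne')]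
    simp
  · simp only [if_neg hθ]
    have hc : (-(Complex.I * θ)) ≠ 0 := by
      simp [Complex.ext_iff, hθ]
    have hint : ∀ T : ℝ, (∫ τ in (0:ℝ)..T, Complex.exp (-(Complex.I * (τ * θ))))
        = (Complex.exp (-(Complex.I * θ) * T) - 1) / (-(Complex.I * θ)) := by
      intro T
      have h1 : ∀ τ : ℝ, -(Complex.I * (τ * θ)) = (-(Complex.I * θ)) * τ := by
        intro τ; ring
      simp_rw [h1]
      rw [integral_exp_mul_complex hc]
      simp
    have hnorm : ∀ᶠ T : ℝ in atTop,
        ‖((1 / T : ℝ) : ℂ) * ∫ τ in (0:ℝ)..T, Complex.exp (-(Complex.I * (τ * θ)))‖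
          ≤ (1 / T) * (2 / ‖(-(Complex.I * θ))‖) := by
      filter_upwards [eventually_gt_atTop (0:ℝ)] with T hT
      rw [hint T, norm_mul, norm_div]
      have habs : ‖Complex.exp (-(Complex.I * θ) * T)‖ = 1 := by
        rw [Complex.norm_exp]
        simp [Complex.mul_re]
      have h2 : ‖Complex.exp (-(Complex.I * θ) * T) - 1‖ ≤ 2 := by
        calc ‖Complex.exp (-(Complex.I * θ) * T) - 1‖
            ≤ ‖Complex.exp (-(Complex.I * θ) * T)‖ + ‖(1:ℂ)‖ := norm_sub_le _ _
          _ ≤ 2 := by rw [habs]; norm_num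
      have : ‖((1 / T : ℝ) : ℂ)‖ = 1 / T := by
        rw [Complex.norm_real, Real.norm_eq_abs, abs_of_pos (by positivity)]
      rw [this]
      gcongr
    have hlim : Tendsto (fun T : ℝ => (1 / T) * (2 / ‖(-(Complex.I * θ))‖)) atTop (nhds 0) := by
      have := (tendsto_inv_atTop_zero : Tendsto (fun x:ℝ => x⁻¹) atTop (nhds 0)).mul_const (2 / ‖(-(Complex.I * θ))‖)
      simpa [one_div] using this
    exact squeeze_zero_norm' hnorm hlim

theorem longtime_avg_exp_nonresonant
    {n : ℕ} (E : Fin n → ℝ) (hinj : Function.Injective E)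
    (hnr : ∀ α β γ σ : Fin n, α ≠ β → σ ≠ γ →
      E β - E α = E γ - E σ → (α, β) = (σ, γ))
    (α β γ σ : Fin n) :
    Tendsto (fun T : ℝ => ((1 / T : ℝ) : ℂ) * ∫ τ in (0:ℝ)..T,
        Complex.exp (-(Complex.I * (τ * (E β - E α + E γ - E σ))))) atTop
      (nhds ((if α = β then (1:ℂ) else 0) * (if σ = γ then 1 else 0)
        + (if σ = β then 1 else 0) * (if γ = α then 1 else 0)
        - (if α = β then 1 else 0) * (if β = γ then 1 else 0) * (if γ = σ then 1 else 0))) := by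
  have key := avg_exp_key (E β - E α + E γ - E σ)
  have hval : (if E β - E α + E γ - E σ = 0 then (1:ℂ) else 0)
      = ((if α = β then (1:ℂ) else 0) * (if σ = γ then 1 else 0)
        + (if σ = β then 1 else 0) * (if γ = α then 1 else 0)
        - (if α = β then 1 else 0) * (if β = γ then 1 else 0) * (if γ = σ then 1 else 0)) := by
    by_cases hab : α = β
    · subst hab
      by_cases hsg : σ = γ
      · subst hsg
        simp only [if_pos rfl]
        by_cases hag : α = σ
        · subst hag; simp
        · have h1 : σ ≠ α := fun h => hag h.symm
          simp [sub_self, hag, h1, Ne.symm hag]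
      · have : E γ - E σ ≠ 0 := sub_ne_zero.mpr (fun h => hsg (hinj h).symm)
        have h0 : E α - E α + E γ - E σ ≠ 0 := by
          intro h; apply this; linarith [sub_eq_zero.mpr (rfl : E α = E α)]
        have hsb : ¬ (σ = α ∧ γ = α) := by
          rintro ⟨h1, h2⟩; exact hsg (h1.trans h2.symm)
        simp only [if_neg h0, if_neg hsg, if_neg (fun h : γ = σ => hsg h.symm)]
        rcases Classical.em (σ = α) with h1 | h1
        · rcases Classical.em (γ = α) with h2 | h2
          · exact absurd ⟨h1, h2⟩ hsb
          · simp [h1, h2]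
        · simp [h1]
    · by_cases hsg : σ = γ
      · subst hsg
        have : E β - E α ≠ 0 := sub_ne_zero.mpr (fun h => hab (hinj h).symm)
        have h0 : E β - E α + E σ - E σ ≠ 0 := by intro h; apply this; linarith
        have hnb : ¬ (σ = β ∧ σ = α) := by
          rintro ⟨h1, h2⟩; exact hab (h2.symm.trans h1)
        simp only [if_neg h0, if_neg hab]
        rcases Classical.em (σ = β) with h1 | h1
        · rcases Classical.em (σ = α) with h2 | h2
          · exact absurd ⟨h1, h2⟩ hnb
          · have hba : ¬ β = α := fun h => h2 (h1.trans h)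
            simp [h1, hba]
        · simp [h1]
      · by_cases h0 : E β - E α + E γ - E σ = 0
        · have heq : E β - E α = E σ - E γ := by linarith
          have := hnr α β σ γ hab (fun h => hsg h.symm) heq
          have hag : α = γ := (Prod.ext_iff.mp this).1
          have hbs : β = σ := (Prod.ext_iff.mp this).2
          simp [h0, hab, hbs.symm, hag.symm, hsg]
        · have hnb : ¬ (σ = β ∧ γ = α) := by
            rintro ⟨h1, h2⟩
            apply h0
            rw [h1, h2]; ring
          simp only [if_neg h0, if_neg hab]
          rcases Classical.em (σ = β) with h1 | h1
          · rcases Classical.em (γ = α) with h2 | h2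
            · exact absurd ⟨h1, h2⟩ hnb
            · simp [h1, h2]
          · simp [h1]
  rw [← hval]
  exact_mod_cast key
end

section
/- Let ψ be a unit vector in a finite-dimensional Hilbert space, H = ∑_{α=1}^{n} E_α Π_α a self-adjoint operator with distinct eigenvalues E_α and orthogonal spectral projections Π_α, and P an orthogonal projection of rank d in dimension D. Then the long-time average L = lim_{T→∞}(1/T)∫_0^T |‖P e^{−iτH}ψ‖² − d/D|² dτ satisfies L = ∑_{α≠β} |⟨φ̃_α, P φ̃_β⟩|² + (∑_α ⟨φ̃_α, P φ̃_α⟩ − d/D)² + L₃^{(r)}, where φ̃_α = Π_α ψ and L₃^{(r)} = ∑_F ∑_{(α,σ)∈𝔉_F} ∑_{(β,γ)∈𝔉_F, (β,γ)∉{(α,σ),(σ,α)}} ⟨φ̃_α, P φ̃_β⟩⟨φ̃_σ, P φ̃_γ⟩, with 𝔉_F = {(α,γ) : E_α + E_γ = F}. -/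
open MeasureTheory Filter Module
open MeasureTheory Filter

lemma hasDeriv_aux (θ : ℝ) (τ : ℝ) :
    HasDerivAt (fun t : ℝ => Complex.exp (Complex.I * (θ * t))) (Complex.I * θ * Complex.exp (Complex.I * (θ * τ))) τ := by
  have h1 : HasDerivAt (fun t : ℝ => Complex.I * ((θ : ℂ) * (t : ℂ))) (Complex.I * θ) τ := by
    simpa [mul_assoc] using (Complex.ofRealCLM.hasDerivAt (x := τ)).const_mul (Complex.I * θ)
  simpa [mul_comm] using h1.cexp

lemma avg_exp_tendsto (θ : ℝ) (a : ℂ) :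
    Tendsto (fun T : ℝ => (1 / T) * ∫ τ in (0:ℝ)..T, (a * Complex.exp (Complex.I * (θ * τ))).re)
      atTop (nhds (if θ = 0 then a.re else 0)) := by
  by_cases hθ : θ = 0
  · subst hθ
    simp only [if_pos rfl, Complex.ofReal_zero, zero_mul, mul_zero, Complex.exp_zero, mul_one]
    rw [show (fun T : ℝ => (1 / T) * ∫ τ in (0:ℝ)..T, a.re) = fun T : ℝ => (1/T) * (T * a.re) by
      funext T; rw [intervalIntegral.integral_const]; simp only [smul_eq_mul, sub_zero]]
    apply Tendsto.congr' (f₁ := fun _ : ℝ => a.re)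
    · filter_upwards [eventually_gt_atTop (0:ℝ)] with T hT
      field_simp
    · exact tendsto_const_nhds
  · rw [if_neg hθ]
    have hIθ : (Complex.I * θ) ≠ 0 := by
      simp [Complex.ext_iff, hθ]
    have hint : ∀ T : ℝ, ∫ τ in (0:ℝ)..T, Complex.exp (Complex.I * (θ * τ)) =
        Complex.exp (Complex.I * (θ * T)) / (Complex.I * θ) - Complex.exp (Complex.I * (θ * 0)) / (Complex.I * θ) := by
      intro T
      apply intervalIntegral.integral_eq_sub_of_hasDerivAt
      · intro τ _
        have := (hasDeriv_aux θ τ).div_const (Complex.I * θ)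
        simpa [mul_div_assoc, mul_div_cancel_left₀ _ hIθ] using this
      · exact (Continuous.intervalIntegrable (by continuity) 0 T)
    have hre : ∀ T : ℝ, (∫ τ in (0:ℝ)..T, (a * Complex.exp (Complex.I * (θ * τ))).re) =
        (a * (Complex.exp (Complex.I * (θ * T)) / (Complex.I * θ) - Complex.exp (Complex.I * (θ * 0)) / (Complex.I * θ))).re := by
      intro T
      have hi : IntervalIntegrable (fun τ : ℝ => a * Complex.exp (Complex.I * (θ * τ))) volume 0 T :=
        (Continuous.intervalIntegrable (by continuity) 0 T)
      rw [← hint T, ← intervalIntegral.integral_const_mul]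
      simpa only [Complex.reCLM_apply] using (Complex.reCLM.intervalIntegral_comp_comm (by exact hi))
    -- bounding
    have hnorm1 : ∀ t : ℝ, ‖Complex.exp (Complex.I * (θ * t))‖ = 1 := by
      intro t
      rw [Complex.norm_exp]
      simp
    set C : ℝ := ‖a‖ * (2 / ‖(Complex.I * θ : ℂ)‖) with hC
    have hbound : ∀ T : ℝ, |∫ τ in (0:ℝ)..T, (a * Complex.exp (Complex.I * (θ * τ))).re| ≤ C := by
      intro T
      rw [hre T]
      calc |(a * (Complex.exp (Complex.I * (θ * T)) / (Complex.I * θ) - Complex.exp (Complex.I * (θ * 0)) / (Complex.I * θ))).re|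
          ≤ ‖(a * (Complex.exp (Complex.I * (θ * T)) / (Complex.I * θ) - Complex.exp (Complex.I * (θ * 0)) / (Complex.I * θ)))‖ :=
            Complex.abs_re_le_norm _
        _ ≤ C := by
            rw [norm_mul, hC]
            apply mul_le_mul_of_nonneg_left _ (norm_nonneg a)
            calc ‖(Complex.exp (Complex.I * (θ * T)) / (Complex.I * θ) - Complex.exp (Complex.I * (θ * 0)) / (Complex.I * θ))‖
                ≤ ‖Complex.exp (Complex.I * (θ * T)) / (Complex.I * θ)‖ + ‖Complex.exp (Complex.I * (θ * 0)) / (Complex.I * θ)‖ :=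
                  norm_sub_le _ _
              _ = 2 / ‖(Complex.I * θ : ℂ)‖ := by
                  rw [norm_div, norm_div, hnorm1 T]
                  have h2 : ‖Complex.exp (Complex.I * ((θ:ℂ) * 0))‖ = 1 := by
                    norm_num [Complex.norm_exp]
                  rw [h2]; ring
    refine squeeze_zero_norm' (a := fun T : ℝ => C / T) ?_ ?_
    · filter_upwards [eventually_gt_atTop (0:ℝ)] with T hT
      rw [Real.norm_eq_abs, abs_mul, abs_of_pos (by positivity : (0:ℝ) < 1/T)]
      rw [one_div, inv_mul_eq_div]
      exact (div_le_div_iff_of_pos_right hT).mpr (hbound T)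
    · exact tendsto_const_nhds.div_atTop tendsto_id

lemma avg_exp_sum_tendsto {ι : Type*} [Fintype ι] (θ : ι → ℝ) (a : ι → ℂ) :
    Tendsto (fun T : ℝ => (1 / T) * ∫ τ in (0:ℝ)..T,
        (∑ k, a k * Complex.exp (Complex.I * (θ k * τ))).re)
      atTop (nhds (∑ k, if θ k = 0 then (a k).re else 0)) := by
  have heq : ∀ T : ℝ, (1 / T) * (∫ τ in (0:ℝ)..T, (∑ k, a k * Complex.exp (Complex.I * (θ k * τ))).re)
      = ∑ k, (1 / T) * ∫ τ in (0:ℝ)..T, (a k * Complex.exp (Complex.I * (θ k * τ))).re := by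
    intro T
    rw [← Finset.mul_sum]
    congr 1
    rw [← intervalIntegral.integral_finset_sum]
    · congr 1; funext τ; rw [Complex.re_sum]
    · intro k _
      exact (Continuous.intervalIntegrable (by continuity) 0 T)
  simp only [heq]
  exact tendsto_finset_sum _ (fun k _ => avg_exp_tendsto (θ k) (a k))

lemma sum_block_eq {n : ℕ} (E : Fin n → ℝ) (c : Fin n → Fin n → ℂ)
    (hconj : ∀ α β, (starRingEnd ℂ) (c α β) = c β α) :
    (∑ p : Fin n × Fin n, ∑ q : Fin n × Fin n,
        if (E p.1 - E p.2) - (E q.1 - E q.2) = 0 then (c p.1 p.2 * (starRingEnd ℂ) (c q.1 q.2)).re else 0)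
    = (∑ α, ∑ β, if α ≠ β then ‖c α β‖ ^ 2 else 0)
      + (∑ α, (c α α).re) ^ 2
      + (∑ α, ∑ σ, ∑ β, ∑ γ,
          if E β + E γ = E α + E σ ∧ (β, γ) ≠ (α, σ) ∧ (β, γ) ≠ (σ, α) then
            c α β * c σ γ else 0).re := by
  have hdiag : ∀ α, (c α α).im = 0 := fun α => (Complex.conj_eq_iff_im).1 (hconj α α)
  have lhs_eq : (∑ p : Fin n × Fin n, ∑ q : Fin n × Fin n,
        if (E p.1 - E p.2) - (E q.1 - E q.2) = 0 then (c p.1 p.2 * (starRingEnd ℂ) (c q.1 q.2)).re else 0)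
      = ∑ α, ∑ β, ∑ σ, ∑ γ,
          if E β + E γ = E α + E σ then (c α β * c σ γ).re else 0 := by
    rw [Fintype.sum_prod_type]
    refine Finset.sum_congr rfl fun α _ => Finset.sum_congr rfl fun β _ => ?_
    rw [Fintype.sum_prod_type]
    rw [Finset.sum_comm]
    refine Finset.sum_congr rfl fun σ _ => Finset.sum_congr rfl fun γ _ => ?_
    rw [hconj γ σ]
    refine if_congr ?_ rfl rfl
    constructor <;> intro h <;> dsimp at * <;> linarith
  rw [lhs_eq]
  have split : ∀ α β σ γ : Fin n,
      (if E β + E γ = E α + E σ then (c α β * c σ γ).re else 0)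
      = (if E β + E γ = E α + E σ ∧ (β, γ) ≠ (α, σ) ∧ (β, γ) ≠ (σ, α) then (c α β * c σ γ).re else 0)
        + (if β = α ∧ γ = σ then (c α β * c σ γ).re else 0)
        + (if (β = σ ∧ γ = α) ∧ ¬(β = α ∧ γ = σ) then (c α β * c σ γ).re else 0) := by
    intro α β σ γ
    by_cases h1 : (β, γ) = (α, σ)
    · rw [Prod.mk.injEq] at h1
      obtain ⟨rfl, rfl⟩ := h1
      simp [Prod.mk.injEq]
    · by_cases h2 : (β, γ) = (σ, α)
      · rw [Prod.mk.injEq] at h2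
        obtain ⟨rfl, rfl⟩ := h2
        rw [Prod.mk.injEq] at h1
        have hcond : E β + E γ = E γ + E β := by ring
        simp [hcond, h1, Prod.mk.injEq]
      · rw [Prod.mk.injEq] at h1 h2
        by_cases hcond : E β + E γ = E α + E σ <;>
          simp [hcond, h1, h2, Prod.mk.injEq]
  simp only [split, Finset.sum_add_distrib]
  have hA : (∑ α, ∑ β, ∑ σ, ∑ γ : Fin n,
      if E β + E γ = E α + E σ ∧ (β, γ) ≠ (α, σ) ∧ (β, γ) ≠ (σ, α) then (c α β * c σ γ).re else 0)
      = (∑ α, ∑ σ, ∑ β, ∑ γ,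
          if E β + E γ = E α + E σ ∧ (β, γ) ≠ (α, σ) ∧ (β, γ) ≠ (σ, α) then
            c α β * c σ γ else 0).re := by
    simp only [Complex.re_sum, apply_ite Complex.re, Complex.zero_re]
    exact Finset.sum_congr rfl fun α _ => Finset.sum_comm
  have hB : (∑ α, ∑ β, ∑ σ, ∑ γ : Fin n,
      if β = α ∧ γ = σ then (c α β * c σ γ).re else 0) = (∑ α, (c α α).re) ^ 2 := by
    have h1 : ∀ α β : Fin n, (∑ σ, ∑ γ : Fin n, if β = α ∧ γ = σ then (c α β * c σ γ).re else 0)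
        = if β = α then ∑ σ, (c α β * c σ σ).re else 0 := by
      intro α β
      by_cases hβ : β = α
      · simp [hβ, Finset.sum_ite_eq']
      · simp [hβ]
    simp only [h1]
    simp only [Finset.sum_ite_eq', Finset.mem_univ, if_true]
    have h2 : ∀ α σ : Fin n, (c α α * c σ σ).re = (c α α).re * (c σ σ).re := by
      intro α σ
      rw [Complex.mul_re, hdiag, hdiag]
      ring
    simp only [h2]
    rw [← Finset.sum_mul_sum, sq]
  have hC : (∑ α, ∑ β, ∑ σ, ∑ γ : Fin n,
      if (β = σ ∧ γ = α) ∧ ¬(β = α ∧ γ = σ) then (c α β * c σ γ).re else 0)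
      = ∑ α, ∑ β, if α ≠ β then ‖c α β‖ ^ 2 else 0 := by
    refine Finset.sum_congr rfl fun α _ => Finset.sum_congr rfl fun β _ => ?_
    have h1 : ∀ σ : Fin n, (∑ γ : Fin n, if (β = σ ∧ γ = α) ∧ ¬(β = α ∧ γ = σ) then (c α β * c σ γ).re else 0)
        = if β = σ ∧ ¬(β = α ∧ α = σ) then (c α β * c σ α).re else 0 := by
      intro σ
      by_cases hb : β = σ ∧ ¬(β = α ∧ α = σ)
      · rw [if_pos hb]
        rw [Finset.sum_eq_single_of_mem α (Finset.mem_univ α)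
          (fun γ _ hγ => by rw [if_neg]; rintro ⟨⟨-, rfl⟩, -⟩; exact hγ rfl)]
        exact if_pos ⟨⟨hb.1, rfl⟩, hb.2⟩
      · rw [if_neg hb]
        refine Finset.sum_eq_zero fun γ _ => ?_
        rw [if_neg]
        rintro ⟨⟨rfl, rfl⟩, hn⟩
        exact hb ⟨rfl, hn⟩
    simp only [h1]
    rw [Finset.sum_eq_single_of_mem β (Finset.mem_univ β)
      (fun σ _ hσ => by rw [if_neg]; rintro ⟨rfl, -⟩; exact hσ rfl)]
    by_cases hab : α = β
    · subst hab; simp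
    · rw [if_pos ⟨rfl, fun h => hab h.2⟩, if_pos hab]
      rw [← hconj α β, Complex.mul_conj]
      simp [Complex.normSq_eq_norm_sq, ← Complex.ofReal_pow]
  rw [hA, hB, hC]
  ring

theorem longtime_avg_deviation_sq_decomposition
    {V : Type*} [NormedAddCommGroup V] [InnerProductSpace ℂ V] [FiniteDimensional ℂ V]
    (D d : ℕ) (hD : finrank ℂ V = D) (hDpos : 0 < D)
    {n : ℕ} (E : Fin n → ℝ) (hinj : Function.Injective E)
    (Pr : Fin n → (V →ₗ[ℂ] V))
    (hsa : ∀ α, ∀ x y : V, (inner ℂ (Pr α x) y : ℂ) = inner ℂ x (Pr α y))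
    (horth : ∀ α β, Pr α ∘ₗ Pr β = if α = β then Pr α else 0)
    (hcomplete : ∑ α, Pr α = LinearMap.id)
    (P : V →ₗ[ℂ] V) (hPidem : P ∘ₗ P = P)
    (hPsa : ∀ x y : V, (inner ℂ (P x) y : ℂ) = inner ℂ x (P y))
    (hrank : finrank ℂ (LinearMap.range P) = d)
    (ψ : V) (hψ : ‖ψ‖ = 1) :
    Tendsto (fun T : ℝ => (1 / T) * ∫ τ in (0:ℝ)..T,
        |‖P (∑ α, Complex.exp (-(Complex.I * (τ * E α))) • (Pr α ψ))‖ ^ 2 - (d : ℝ) / D| ^ 2)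
      atTop
      (nhds
        ((∑ α, ∑ β, if α ≠ β then ‖(inner ℂ (Pr α ψ) (P (Pr β ψ)) : ℂ)‖ ^ 2 else 0)
          + ((∑ α, (inner ℂ (Pr α ψ) (P (Pr α ψ)) : ℂ).re) - (d : ℝ) / D) ^ 2
          + (∑ α, ∑ σ, ∑ β, ∑ γ,
              if E β + E γ = E α + E σ ∧ (β, γ) ≠ (α, σ) ∧ (β, γ) ≠ (σ, α) then
                (inner ℂ (Pr α ψ) (P (Pr β ψ)) : ℂ) * (inner ℂ (Pr σ ψ) (P (Pr γ ψ)) : ℂ)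
              else 0).re)) := by
  classical
  have hconj : ∀ α β : Fin n, (starRingEnd ℂ) (inner ℂ (Pr α ψ) (P (Pr β ψ)) : ℂ)
      = (inner ℂ (Pr β ψ) (P (Pr α ψ)) : ℂ) := by
    intro α β
    rw [inner_conj_symm, hPsa]
  set q : ℝ := (d : ℝ) / D with hq
  set c : Fin n → Fin n → ℂ := fun α β => (inner ℂ (Pr α ψ) (P (Pr β ψ)) : ℂ) with hcdef
  have hconjc : ∀ α β, (starRingEnd ℂ) (c α β) = c β α := hconj
  set bf : (Fin n × Fin n) ⊕ Unit → ℂ :=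
    Sum.elim (fun p : Fin n × Fin n => c p.1 p.2) (fun _ => -(q:ℂ)) with hbf
  set θf : (Fin n × Fin n) ⊕ Unit → ℝ :=
    Sum.elim (fun p : Fin n × Fin n => E p.1 - E p.2) (fun _ => 0) with hθf
  -- pointwise identity for the integrand
  have hpt : ∀ τ : ℝ,
      |‖P (∑ α, Complex.exp (-(Complex.I * (τ * E α))) • (Pr α ψ))‖ ^ 2 - q| ^ 2
      = (∑ k : ((Fin n × Fin n) ⊕ Unit) × ((Fin n × Fin n) ⊕ Unit),
          (bf k.1 * (starRingEnd ℂ) (bf k.2))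
            * Complex.exp (Complex.I * ((θf k.1 - θf k.2 : ℝ) * τ))).re := by
    intro τ
    set e : Fin n → ℂ := fun α => Complex.exp (-(Complex.I * (τ * E α))) with he
    set v : V := ∑ α, e α • Pr α ψ with hv
    have hPv : P v = ∑ β, e β • P (Pr β ψ) := by
      rw [hv, map_sum]; simp only [_root_.map_smul]
    set Fc : ℂ := ∑ α, ∑ β, c α β * Complex.exp (Complex.I * ((E α - E β) * τ)) with hFc
    have h1 : (inner ℂ v (P v) : ℂ) = Fc := by
      rw [hv, hPv, sum_inner, hFc]
      refine Finset.sum_congr rfl fun α _ => ?_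
      rw [inner_smul_left, inner_sum, Finset.mul_sum]
      refine Finset.sum_congr rfl fun β _ => ?_
      rw [inner_smul_right]
      have hee : (starRingEnd ℂ) (e α) * e β = Complex.exp (Complex.I * ((E α - E β) * τ)) := by
        rw [he]
        dsimp only
        rw [← Complex.exp_conj, ← Complex.exp_add]
        congr 1
        simp only [map_neg, map_mul, Complex.conj_I, Complex.conj_ofReal]
        ring
      rw [← hee]
      ring
    have h3 : ‖P v‖ ^ 2 = (inner ℂ v (P v) : ℂ).re := by
      have hPP : P (P v) = P v := by
        have := DFunLike.congr_fun hPidem v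
        simpa using this
      have h4 : (inner ℂ (P v) (P v) : ℂ) = inner ℂ v (P v) := by
        rw [hPsa v (P v), hPP]
      rw [← h4, inner_self_eq_norm_sq_to_K]
      simp [← Complex.ofReal_pow]
    have hFconj : (starRingEnd ℂ) Fc = Fc := by
      rw [hFc, map_sum]
      rw [Finset.sum_comm]
      refine Finset.sum_congr rfl fun α _ => ?_
      rw [map_sum]
      refine Finset.sum_congr rfl fun β _ => ?_
      rw [map_mul, hconjc α β, ← Complex.exp_conj]
      congr 2
      simp only [map_mul, Complex.conj_I, map_sub, Complex.conj_ofReal]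
      ring
    have hGsum : (∑ k : (Fin n × Fin n) ⊕ Unit,
        bf k * Complex.exp (Complex.I * ((θf k : ℝ) * τ))) = Fc - (q:ℂ) := by
      rw [hbf, hθf, Fintype.sum_sum_type, Fintype.sum_prod_type]
      simp only [Sum.elim_inl, Sum.elim_inr, Complex.ofReal_sub, Complex.ofReal_zero, zero_mul,
        mul_zero, Complex.exp_zero, mul_one, Finset.univ_unique, Finset.sum_const,
        Finset.sum_singleton, Finset.card_singleton, one_smul, smul_eq_mul]
      rw [hFc]
      ring
    have hGim : (Fc - (q:ℂ)).im = 0 := by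
      have : (starRingEnd ℂ) (Fc - (q:ℂ)) = Fc - (q:ℂ) := by
        rw [map_sub, hFconj, Complex.conj_ofReal]
      exact Complex.conj_eq_iff_im.mp this
    have hGG : (∑ k : ((Fin n × Fin n) ⊕ Unit) × ((Fin n × Fin n) ⊕ Unit),
        (bf k.1 * (starRingEnd ℂ) (bf k.2))
          * Complex.exp (Complex.I * ((θf k.1 - θf k.2 : ℝ) * τ)))
        = (Fc - (q:ℂ)) * (starRingEnd ℂ) (Fc - (q:ℂ)) := by
      rw [← hGsum, map_sum, Finset.sum_mul_sum, Fintype.sum_prod_type]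
      refine Finset.sum_congr rfl fun k1 _ => Finset.sum_congr rfl fun k2 _ => ?_
      rw [map_mul, ← Complex.exp_conj]
      rw [show ((starRingEnd ℂ) (Complex.I * ((θf k2 : ℝ) * τ)))
          = -(Complex.I * ((θf k2 : ℝ) * τ)) by
        simp only [map_mul, Complex.conj_I, Complex.conj_ofReal]; ring]
      rw [mul_mul_mul_comm, ← Complex.exp_add]
      congr 2
      push_cast
      ring
    rw [hGG, Complex.mul_conj, h3, h1]
    rw [Complex.ofReal_re, sq_abs, Complex.normSq_apply, hGim, Complex.sub_re, Complex.ofReal_re]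
    ring
  -- value of the limit
  have hval : (∑ k : ((Fin n × Fin n) ⊕ Unit) × ((Fin n × Fin n) ⊕ Unit),
      if (θf k.1 - θf k.2 : ℝ) = 0 then (bf k.1 * (starRingEnd ℂ) (bf k.2)).re else 0)
      = (∑ α, ∑ β, if α ≠ β then ‖c α β‖ ^ 2 else 0)
        + ((∑ α, (c α α).re) - q) ^ 2
        + (∑ α, ∑ σ, ∑ β, ∑ γ,
            if E β + E γ = E α + E σ ∧ (β, γ) ≠ (α, σ) ∧ (β, γ) ≠ (σ, α) then
              c α β * c σ γ else 0).re := by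
    rw [Fintype.sum_prod_type, hbf, hθf, Fintype.sum_sum_type]
    simp only [Fintype.sum_sum_type, Sum.elim_inl, Sum.elim_inr, Finset.univ_unique,
      Finset.sum_singleton]
    have hB11 := sum_block_eq E c hconjc
    have hcond1 : ∀ α β : Fin n, ((E α - E β) - 0 = 0) = (β = α) := by
      intro α β
      rw [eq_iff_iff, sub_zero, sub_eq_zero]
      exact ⟨fun h => (hinj h).symm, fun h => by rw [h]⟩
    have hcond2 : ∀ α β : Fin n, ((0 : ℝ) - (E α - E β) = 0) = (β = α) := by
      intro α β
      rw [eq_iff_iff, zero_sub, neg_eq_zero, sub_eq_zero]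
      exact ⟨fun h => (hinj h).symm, fun h => by rw [h]⟩
    have hB12 : (∑ p : Fin n × Fin n,
        if (E p.1 - E p.2) - 0 = 0 then (c p.1 p.2 * (starRingEnd ℂ) (-(q:ℂ))).re else 0)
        = -(q * ∑ α, (c α α).re) := by
      rw [Fintype.sum_prod_type]
      simp only [hcond1, Finset.sum_ite_eq', Finset.mem_univ, if_true]
      rw [Finset.mul_sum, ← Finset.sum_neg_distrib]
      refine Finset.sum_congr rfl fun α _ => ?_
      simp only [map_neg, Complex.conj_ofReal, mul_neg, Complex.neg_re, Complex.mul_re,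
        Complex.ofReal_re, Complex.ofReal_im, mul_zero, sub_zero]
      ring
    have hB21 : (∑ p : Fin n × Fin n,
        if (0:ℝ) - (E p.1 - E p.2) = 0 then ((-(q:ℂ)) * (starRingEnd ℂ) (c p.1 p.2)).re else 0)
        = -(q * ∑ α, (c α α).re) := by
      rw [Fintype.sum_prod_type]
      simp only [hcond2, Finset.sum_ite_eq', Finset.mem_univ, if_true]
      rw [Finset.mul_sum, ← Finset.sum_neg_distrib]
      refine Finset.sum_congr rfl fun α _ => ?_
      rw [hconjc]
      simp only [neg_mul, Complex.neg_re, Complex.mul_re,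
        Complex.ofReal_re, Complex.ofReal_im, zero_mul, sub_zero]
    have hB22 : (if (0:ℝ) - 0 = 0 then ((-(q:ℂ)) * (starRingEnd ℂ) (-(q:ℂ))).re else 0)
        = q ^ 2 := by
      simp [Complex.conj_ofReal, Complex.mul_re, Complex.ofReal_re, Complex.ofReal_im]
      ring
    erw [Finset.sum_add_distrib, hB11, hB12, hB21, hB22]
    ring
  -- assemble
  simp only [hcdef] at hval
  apply Filter.Tendsto.congr (f₁ := fun T : ℝ => (1 / T) * ∫ τ in (0:ℝ)..T,
      (∑ k : ((Fin n × Fin n) ⊕ Unit) × ((Fin n × Fin n) ⊕ Unit),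
        (bf k.1 * (starRingEnd ℂ) (bf k.2))
          * Complex.exp (Complex.I * ((θf k.1 - θf k.2 : ℝ) * τ))).re)
  · intro T
    congr 1
    refine intervalIntegral.integral_congr fun τ _ => (hpt τ).symm
  · have := avg_exp_sum_tendsto (fun k : ((Fin n × Fin n) ⊕ Unit) × ((Fin n × Fin n) ⊕ Unit) => (θf k.1 - θf k.2 : ℝ))
      (fun k => bf k.1 * (starRingEnd ℂ) (bf k.2))
    rwa [hval] at this
end
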